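/- Let $\gamma\in C^2(\mathbb{R})$ satisfy $\gamma>0$ on $(-1,1)$, $\gamma(\pm1)=0$, $\gamma''(\pm1)>0$. Let $\eta:\mathbb{R}\to[-1,1]$ be a fixed function with $\eta(x)=1$ for $x\geq1$ and $\eta(x)=-1$ for $x\leq-1$. Suppose $u:\mathbb{R}\to[-1,1]$ is non-decreasing with $u(0)=0$, and set $v=u-\eta$. Then there exist constants $C_1,C_2>0$ depending only on $\gamma$ such that $\int_{\mathbb{R}}\gamma(u(x))\,dx + C_1 \geq C_2\|v\|_{L^2(\mathbb{R})}^2$. -/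

import Mathlib

open MeasureTheory Set Filter Topology

lemma deriv_nonpos_right (γ : ℝ → ℝ) (hγ : ContDiff ℝ 2 γ)
    (hpos : ∀ x ∈ Set.Ioo (-1 : ℝ) 1, 0 < γ x) (h1 : γ 1 = 0) :
    deriv γ 1 ≤ 0 := by
  have hd : HasDerivAt γ (deriv γ 1) 1 :=
    ((hγ.differentiable (by norm_num)) 1).hasDerivAt
  have ht := hasDerivAt_iff_tendsto_slope.mp hd
  have hmono : 𝓝[<] (1:ℝ) ≤ 𝓝[≠] (1:ℝ) :=
    nhdsWithin_mono _ (fun x hx => ne_of_lt hx)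
  refine le_of_tendsto (ht.mono_left hmono) ?_
  filter_upwards [Ioo_mem_nhdsLT_of_mem (by norm_num : (1:ℝ) ∈ Set.Ioc (-1:ℝ) 1)] with t ht'
  have h0 : 0 < γ t := hpos t ht'
  rw [slope_def_field, h1]
  exact div_nonpos_of_nonneg_of_nonpos (by linarith) (by linarith [ht'.2])

lemma quad_lower (γ : ℝ → ℝ) (hγ : ContDiff ℝ 2 γ)
    (hpos : ∀ x ∈ Set.Ioo (-1 : ℝ) 1, 0 < γ x) (h1 : γ 1 = 0)
    (h2 : 0 < iteratedDeriv 2 γ 1) :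
    ∃ K : ℝ, 0 < K ∧ ∀ t ∈ Set.Icc (0:ℝ) 1, K * (t - 1)^2 ≤ γ t := by
  set a := iteratedDeriv 2 γ 1 with ha
  have hcont2 : Continuous (iteratedDeriv 2 γ) := hγ.continuous_iteratedDeriv 2 le_rfl
  have hev : ∀ᶠ t in 𝓝 (1:ℝ), a/2 < iteratedDeriv 2 γ t :=
    (hcont2.tendsto 1).eventually (eventually_gt_nhds (by linarith))
  obtain ⟨δ, hδ, hball⟩ := Metric.eventually_nhds_iff.mp hev
  set ε := min (δ/2) (1/2) with hε
  have hε0 : 0 < ε := by positivity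
  have hε1 : ε ≤ 1/2 := min_le_right _ _
  have hεδ : ε ≤ δ/2 := min_le_left _ _
  have hsub : ∀ t ∈ Set.Icc (1-ε) 1, a/2 < iteratedDeriv 2 γ t := by
    intro t ht
    apply hball
    rw [Real.dist_eq, abs_lt]
    exact ⟨by linarith [ht.1], by linarith [ht.2]⟩
  -- derivative facts
  have hdiff : Differentiable ℝ γ := hγ.differentiable (by norm_num)
  have hdiff' : Differentiable ℝ (deriv γ) := by
    have := hγ.differentiable_iteratedDeriv 1 (by norm_num)
    rwa [iteratedDeriv_one] at this
  have hd2 : ∀ t, deriv (deriv γ) t = iteratedDeriv 2 γ t := by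
    intro t
    rw [show (2:ℕ) = 1 + 1 from rfl, iteratedDeriv_succ, iteratedDeriv_one]
  -- ψ := deriv γ - a/2 * (t-1) is monotone on [1-ε,1]
  set ψ : ℝ → ℝ := fun t => deriv γ t - a/2 * (t - 1) with hψ
  have hψderiv : ∀ t, HasDerivAt ψ (deriv (deriv γ) t - a/2) t := by
    intro t
    exact ((hdiff' t).hasDerivAt).sub (((hasDerivAt_id t).sub_const 1).const_mul (a/2) |>.congr_deriv (by ring))
  have hψcont : Continuous ψ :=
    (hγ.continuous_deriv (by norm_num)).sub (continuous_const.mul (continuous_id.sub continuous_const))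
  have hint : interior (Set.Icc (1-ε) 1) = Set.Ioo (1-ε) 1 := interior_Icc
  have hψmono : MonotoneOn ψ (Set.Icc (1-ε) 1) := by
    apply monotoneOn_of_deriv_nonneg (convex_Icc _ _) hψcont.continuousOn
    · intro t _
      exact ((hψderiv t).differentiableAt).differentiableWithinAt
    · intro t ht
      rw [hint] at ht
      rw [(hψderiv t).deriv, hd2]
      have := hsub t ⟨ht.1.le, ht.2.le⟩
      linarith
  have hψ1 : ψ 1 = deriv γ 1 := by simp [hψ]
  have hψnonpos : ∀ t ∈ Set.Icc (1-ε) 1, ψ t ≤ 0 := by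
    intro t ht
    have := hψmono ht (Set.right_mem_Icc.mpr (by linarith)) ht.2
    have hd1 := deriv_nonpos_right γ hγ hpos h1
    rw [hψ1] at this; linarith
  -- φ := γ - a/4 (t-1)^2 is antitone on [1-ε,1]
  set φ : ℝ → ℝ := fun t => γ t - a/4 * (t - 1)^2 with hφ
  have hφderiv : ∀ t, HasDerivAt φ (ψ t) t := by
    intro t
    have hq : HasDerivAt (fun t : ℝ => a/4 * (t - 1)^2) (a/2 * (t-1)) t := by
      have := (((hasDerivAt_id t).sub_const 1).pow 2).const_mul (a/4)
      refine this.congr_deriv ?_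
      simp only [id_eq]
      push_cast
      ring
    exact ((hdiff t).hasDerivAt).sub hq
  have hφanti : AntitoneOn φ (Set.Icc (1-ε) 1) := by
    apply antitoneOn_of_deriv_nonpos (convex_Icc _ _)
      ((hγ.continuous.sub (continuous_const.mul ((continuous_id.sub continuous_const).pow 2))).continuousOn)
    · intro t _
      exact ((hφderiv t).differentiableAt).differentiableWithinAt
    · intro t ht
      rw [hint] at ht
      show deriv φ t ≤ 0
      rw [(hφderiv t).deriv]
      exact hψnonpos t ⟨ht.1.le, ht.2.le⟩
  have hquad : ∀ t ∈ Set.Icc (1-ε) 1, a/4 * (t-1)^2 ≤ γ t := by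
    intro t ht
    have := hφanti ht (Set.right_mem_Icc.mpr (by linarith)) ht.2
    simp only [hφ, h1] at this
    nlinarith
  -- compact part
  obtain ⟨t₀, ht₀, hmin⟩ := (isCompact_Icc (a := (0:ℝ)) (b := 1-ε)).exists_isMinOn
    ⟨0, by constructor <;> linarith⟩ hγ.continuous.continuousOn
  have hm : 0 < γ t₀ := hpos t₀ ⟨by linarith [ht₀.1], by linarith [ht₀.2]⟩
  refine ⟨min (a/4) (γ t₀), lt_min (by linarith) hm, ?_⟩
  intro t ht
  rcases le_or_gt t (1-ε) with hc | hc
  · have h1' : γ t₀ ≤ γ t := hmin ⟨ht.1, hc⟩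
    have h2' : (t-1)^2 ≤ 1 := by nlinarith [ht.1, ht.2]
    calc min (a/4) (γ t₀) * (t-1)^2 ≤ γ t₀ * (t-1)^2 := by
          apply mul_le_mul_of_nonneg_right (min_le_right _ _) (sq_nonneg _)
      _ ≤ γ t₀ * 1 := by apply mul_le_mul_of_nonneg_left h2' hm.le
      _ ≤ γ t := by linarith
  · calc min (a/4) (γ t₀) * (t-1)^2 ≤ a/4 * (t-1)^2 := by
          apply mul_le_mul_of_nonneg_right (min_le_left _ _) (sq_nonneg _)
      _ ≤ γ t := hquad t ⟨hc.le, ht.2⟩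


lemma quad_lower_left (γ : ℝ → ℝ) (hγ : ContDiff ℝ 2 γ)
    (hpos : ∀ x ∈ Set.Ioo (-1 : ℝ) 1, 0 < γ x) (hm1 : γ (-1) = 0)
    (h2' : 0 < iteratedDeriv 2 γ (-1)) :
    ∃ K : ℝ, 0 < K ∧ ∀ t ∈ Set.Icc (-1:ℝ) 0, K * (t + 1)^2 ≤ γ t := by
  obtain ⟨K, hK, hKb⟩ := quad_lower (fun x => γ (-x)) (hγ.comp contDiff_neg)
    (fun x hx => hpos (-x) ⟨by linarith [hx.2], by linarith [hx.1]⟩) (by simpa using hm1)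
    (by rw [iteratedDeriv_comp_neg]; simpa using h2')
  refine ⟨K, hK, fun t ht => ?_⟩
  have := hKb (-t) ⟨by linarith [ht.2], by linarith [ht.1]⟩
  simp only [neg_neg] at this
  nlinarith [this]

open scoped ENNReal

/-- Potential energy controls the `L²` distance from the reference profile: for a double-well
potential `γ` there are constants `C₁, C₂ > 0` depending only on `γ` such that for every
reference profile `η` and every non-decreasing `u : ℝ → [-1,1]` with `u(0) = 0`,
`∫ γ(u) + C₁ ≥ C₂ ‖u - η‖²_{L²}`. -/
theorem stmt_11 (γ : ℝ → ℝ) (hγ : ContDiff ℝ 2 γ)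
    (hpos : ∀ x ∈ Set.Ioo (-1 : ℝ) 1, 0 < γ x)
    (h1 : γ 1 = 0) (hm1 : γ (-1) = 0)
    (h2 : 0 < iteratedDeriv 2 γ 1) (h2' : 0 < iteratedDeriv 2 γ (-1)) :
    ∃ C₁ C₂ : ℝ, 0 < C₁ ∧ 0 < C₂ ∧
      ∀ η u : ℝ → ℝ,
        (∀ x, η x ∈ Set.Icc (-1 : ℝ) 1) →
        (∀ x : ℝ, 1 ≤ x → η x = 1) → (∀ x : ℝ, x ≤ -1 → η x = -1) →
        Monotone u → (∀ x, u x ∈ Set.Icc (-1 : ℝ) 1) → u 0 = 0 →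
        ENNReal.ofReal C₂ * ∫⁻ x : ℝ, ENNReal.ofReal ((u x - η x) ^ 2)
          ≤ (∫⁻ x : ℝ, ENNReal.ofReal (γ (u x))) + ENNReal.ofReal C₁ := by
  obtain ⟨K₁, hK₁, hb₁⟩ := quad_lower γ hγ hpos h1 h2
  obtain ⟨K₂, hK₂, hb₂⟩ := quad_lower_left γ hγ hpos hm1 h2'
  set K := min K₁ K₂ with hKdef
  have hK : 0 < K := lt_min hK₁ hK₂
  refine ⟨8 * K, K, by linarith, hK, ?_⟩
  intro η u hη hη1 hηm1 hu hur hu0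
  set f : ℝ → ℝ≥0∞ := fun x => ENNReal.ofReal (γ (u x)) with hf
  set w : ℝ → ℝ≥0∞ := fun x =>
    if 1 ≤ x then ENNReal.ofReal ((u x - 1)^2)
    else if x ≤ -1 then ENNReal.ofReal ((u x + 1)^2)
    else ENNReal.ofReal 4 with hw
  set c : ℝ → ℝ≥0∞ := (Set.Icc (-1:ℝ) 1).indicator (fun _ => ENNReal.ofReal (4*K)) with hc
  -- pointwise: v² ≤ w
  have hvw : ∀ x, ENNReal.ofReal ((u x - η x)^2) ≤ w x := by
    intro x
    rcases le_or_gt 1 x with hx | hx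
    · rw [hw]
      simp only [if_pos hx, hη1 x hx]
      exact le_rfl
    · rcases le_or_gt x (-1) with hx' | hx'
      · rw [hw]
        simp only [if_neg (not_le.mpr hx), if_pos hx', hηm1 x hx']
        exact le_of_eq (by ring_nf)
      · rw [hw]
        simp only [if_neg (not_le.mpr hx), if_neg (not_le.mpr hx')]
        apply ENNReal.ofReal_le_ofReal
        have h₁ := (hur x).1; have h₂ := (hur x).2
        have h₃ := (hη x).1; have h₄ := (hη x).2
        nlinarith
  -- pointwise: K * w ≤ f + c
  have hKw : ∀ x, ENNReal.ofReal K * w x ≤ f x + c x := by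
    intro x
    rcases le_or_gt 1 x with hx | hx
    · have hux : u x ∈ Set.Icc (0:ℝ) 1 := ⟨hu0 ▸ hu (by linarith : (0:ℝ) ≤ x), (hur x).2⟩
      have hb := hb₁ (u x) hux
      calc ENNReal.ofReal K * w x = ENNReal.ofReal (K * (u x - 1)^2) := by
            rw [hw]; simp only [if_pos hx]; rw [ENNReal.ofReal_mul hK.le]
        _ ≤ f x := ENNReal.ofReal_le_ofReal (le_trans
            (mul_le_mul_of_nonneg_right (min_le_left _ _) (sq_nonneg _)) hb)
        _ ≤ f x + c x := le_self_add
    · rcases le_or_gt x (-1) with hx' | hx'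
      · have hux : u x ∈ Set.Icc (-1:ℝ) 0 := ⟨(hur x).1, hu0 ▸ hu (by linarith : x ≤ 0)⟩
        have hb := hb₂ (u x) hux
        calc ENNReal.ofReal K * w x = ENNReal.ofReal (K * (u x + 1)^2) := by
              rw [hw]; simp only [if_neg (not_le.mpr hx), if_pos hx']
              rw [ENNReal.ofReal_mul hK.le]
          _ ≤ f x := ENNReal.ofReal_le_ofReal (le_trans
              (mul_le_mul_of_nonneg_right (min_le_right _ _) (sq_nonneg _)) hb)
          _ ≤ f x + c x := le_self_add
      · have hxm : x ∈ Set.Icc (-1:ℝ) 1 := ⟨hx'.le, hx.le⟩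
        calc ENNReal.ofReal K * w x = ENNReal.ofReal (K * 4) := by
              rw [hw]; simp only [if_neg (not_le.mpr hx), if_neg (not_le.mpr hx')]
              rw [ENNReal.ofReal_mul hK.le]
          _ ≤ c x := by
              rw [hc, Set.indicator_of_mem hxm]
              exact ENNReal.ofReal_le_ofReal (by linarith)
          _ ≤ f x + c x := le_add_self
  have hcmeas : Measurable c := measurable_const.indicator measurableSet_Icc
  have hcint : ∫⁻ x, c x = ENNReal.ofReal (8 * K) := by
    rw [hc, lintegral_indicator measurableSet_Icc, setLIntegral_const, Real.volume_Icc,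
      ← ENNReal.ofReal_mul (by positivity)]
    norm_num
    ring_nf
    rw [ENNReal.ofReal_mul hK.le, ENNReal.ofReal_ofNat]
  calc ENNReal.ofReal K * ∫⁻ x, ENNReal.ofReal ((u x - η x)^2)
      ≤ ENNReal.ofReal K * ∫⁻ x, w x := mul_le_mul_right (lintegral_mono hvw) _
    _ = ∫⁻ x, ENNReal.ofReal K * w x := (lintegral_const_mul' _ _ ENNReal.ofReal_ne_top).symm
    _ ≤ ∫⁻ x, (f x + c x) := lintegral_mono hKw
    _ = (∫⁻ x, f x) + ∫⁻ x, c x := lintegral_add_right f hcmeas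
    _ = (∫⁻ x, f x) + ENNReal.ofReal (8 * K) := by rw [hcint]
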